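/- Let N ≥ 1 be a natural number, d̄ > 0 real, and Δ_min ≤ Δ_max reals with Δ_max − Δ_min ≤ 1/(N·d̄). Define the static phase shifts θ_n = −2π·n·d̄·(Δ_min + 1/(2N·d̄)) for n = 0, …, N−1. Then for every Δ ∈ [Δ_min, Δ_max], the passive beamforming gain satisfies ‖∑_{n=0}^{N−1} exp(i(θ_n + 2π n d̄ Δ))‖² ≥ 1/(sin(π/(2N)))². -/

import Mathlib

/-- Main claim of Theorem 1: when the angular span has width at most
`1 / (N d̄)`, the static phase shifts centered on the span achieve worst-case
gain at least `1 / sin² (π / (2N))` over the whole span. -/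
lemma tele_sum (N : ℕ) (hN : 1 ≤ N) :
    (∑ n ∈ Finset.range N, Real.cos ((2 * n + 1 - N) * (Real.pi / (2 * N)))) *
      Real.sin (Real.pi / (2 * N)) = 1 := by
  have hN0 : (N : ℝ) ≠ 0 := by
    exact_mod_cast Nat.one_le_iff_ne_zero.mp hN
  set t := Real.pi / (2 * N) with ht
  have key : ∀ n : ℕ,
      Real.sin ((2 * ((n : ℝ) + 1) - N) * t) - Real.sin ((2 * n - N) * t)
        = 2 * Real.sin t * Real.cos ((2 * n + 1 - N) * t) := by
    intro n
    rw [Real.sin_sub_sin]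
    have h1 : ((2 * ((n : ℝ) + 1) - N) * t - ((2 * n : ℝ) - N) * t) / 2 = t := by ring
    have h2 : ((2 * ((n : ℝ) + 1) - N) * t + ((2 * n : ℝ) - N) * t) / 2
        = (2 * n + 1 - N) * t := by ring
    rw [h1, h2]
  have hsum := Finset.sum_range_sub (fun n => Real.sin ((2 * n - N) * t)) N
  have hNt : (N : ℝ) * t = Real.pi / 2 := by
    rw [ht]; field_simp
  have hfN : Real.sin (((2 * (N : ℝ)) - N) * t) = 1 := by
    have : ((2 * (N : ℝ)) - N) * t = Real.pi / 2 := by rw [← hNt]; ring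
    rw [this, Real.sin_pi_div_two]
  have hf0 : Real.sin (((2 * (0 : ℝ)) - N) * t) = -1 := by
    have : ((2 * (0 : ℝ)) - N) * t = -(Real.pi / 2) := by rw [← hNt]; ring
    rw [this, Real.sin_neg, Real.sin_pi_div_two]
  push_cast at hsum
  simp only [key] at hsum
  rw [hfN, hf0] at hsum
  rw [← Finset.mul_sum] at hsum
  nlinarith [hsum]

theorem stmt_9 (N : ℕ) (hN : 1 ≤ N) (dbar : ℝ) (hd : 0 < dbar)
    (Δmin Δmax : ℝ) (hΔ : Δmin ≤ Δmax) (hspan : Δmax - Δmin ≤ 1 / (N * dbar))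
    (θ : Fin N → ℝ)
    (hθ : ∀ n : Fin N, θ n = -(2 * Real.pi * n * dbar * (Δmin + 1 / (2 * N * dbar)))) :
    ∀ Δ ∈ Set.Icc Δmin Δmax,
      1 / Real.sin (Real.pi / (2 * N)) ^ 2 ≤
        ‖∑ n : Fin N, Complex.exp (Complex.I *
          ((θ n + 2 * Real.pi * n * dbar * Δ : ℝ) : ℂ))‖ ^ 2 := by
  intro Δ hΔ'
  obtain ⟨hΔ1, hΔ2⟩ := hΔ'
  have hNpos : (0 : ℝ) < N := by exact_mod_cast hN
  set t := Real.pi / (2 * N) with ht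
  have hπ := Real.pi_pos
  have htpos : 0 < t := by positivity
  have htle : t ≤ Real.pi / 2 := by
    have hN1 : (1:ℝ) ≤ N := by exact_mod_cast hN
    rw [ht, div_le_div_iff₀ (by positivity) two_pos]; nlinarith
  have hsin : 0 < Real.sin t :=
    Real.sin_pos_of_pos_of_lt_pi htpos (lt_of_le_of_lt htle (by linarith))
  set c : ℝ := Δmin + 1 / (2 * N * dbar) with hc
  set x : ℝ := 2 * Real.pi * dbar * (Δ - c) with hx
  have hphase : ∀ n : Fin N, (θ n + 2 * Real.pi * n * dbar * Δ) = n * x := by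
    intro n; rw [hθ n, hx, hc]; ring
  have he : Real.pi * dbar * (1 / (2 * N * dbar)) = t := by
    rw [ht]; field_simp
  have hxbound : |x / 2| ≤ t := by
    have h1 : Δ - c ≤ 1 / (2 * N * dbar) := by
      have hh : 1 / (N * dbar) - 1 / (2 * N * dbar) = 1 / (2 * N * dbar) := by
        field_simp; ring
      rw [hc]; linarith
    have h2 : -(1 / (2 * N * dbar)) ≤ Δ - c := by rw [hc]; simp; linarith
    have hπd : (0 : ℝ) ≤ Real.pi * dbar := by positivity
    have hx2 : x / 2 = Real.pi * dbar * (Δ - c) := by rw [hx]; ring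
    rw [abs_le]
    constructor
    · linarith [mul_le_mul_of_nonneg_left h2 hπd]
    · linarith [mul_le_mul_of_nonneg_left h1 hπd]
  -- the sum and its rotation
  set S : ℂ := ∑ n : Fin N, Complex.exp (Complex.I * (((n : ℝ) * x : ℝ) : ℂ)) with hS
  have hgoal : (∑ n : Fin N, Complex.exp (Complex.I *
      ((θ n + 2 * Real.pi * n * dbar * Δ : ℝ) : ℂ))) = S := by
    rw [hS]; exact Finset.sum_congr rfl fun n _ => by rw [hphase n]
  set φ : ℝ := ((N : ℝ) - 1) * x / 2 with hφ
  set T : ℂ := Complex.exp (((-φ : ℝ) : ℂ) * Complex.I) * S with hT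
  have hnorm : ‖T‖ = ‖S‖ := by
    rw [hT, norm_mul,
      Complex.norm_exp_ofReal_mul_I, one_mul]
  have hTsum : T = ∑ n : Fin N, Complex.exp ((((n : ℝ) * x - φ : ℝ) : ℂ) * Complex.I) := by
    rw [hT, hS, Finset.mul_sum]
    refine Finset.sum_congr rfl fun n _ => ?_
    rw [← Complex.exp_add]
    congr 1
    push_cast
    ring
  have hre : T.re = ∑ n ∈ Finset.range N, Real.cos ((2 * n + 1 - N) * (x / 2)) := by
    rw [hTsum, Complex.re_sum, Fin.sum_univ_eq_sum_range
      (fun n => (Complex.exp ((((n : ℝ) * x - φ : ℝ) : ℂ) * Complex.I)).re)]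
    refine Finset.sum_congr rfl fun n _ => ?_
    rw [Complex.exp_ofReal_mul_I_re]
    congr 1
    rw [hφ]; ring
  -- pointwise bound
  have hpt : ∀ n ∈ Finset.range N,
      Real.cos ((2 * n + 1 - N) * t) ≤ Real.cos ((2 * n + 1 - N) * (x / 2)) := by
    intro n hn
    have hn' : (n : ℝ) ≤ N - 1 := by
      have := Finset.mem_range.mp hn
      have : (n : ℝ) + 1 ≤ N := by exact_mod_cast this
      linarith
    have hn0 : (0 : ℝ) ≤ n := Nat.cast_nonneg n
    have hm : |(2 * (n : ℝ) + 1 - N)| ≤ N := by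
      rw [abs_le]; constructor <;> nlinarith
    rw [← Real.cos_abs ((2 * n + 1 - N) * (x / 2)), ← Real.cos_abs ((2 * n + 1 - N) * t)]
    apply Real.cos_le_cos_of_nonneg_of_le_pi (abs_nonneg _)
    · rw [abs_mul, abs_of_pos htpos]
      have : |(2 * (n : ℝ) + 1 - N)| * t ≤ N * t :=
        mul_le_mul_of_nonneg_right hm htpos.le
      have hNt : (N : ℝ) * t = Real.pi / 2 := by rw [ht]; field_simp
      linarith
    · rw [abs_mul, abs_mul, abs_of_pos htpos]
      exact mul_le_mul_of_nonneg_left hxbound (abs_nonneg _)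
  have hts : (∑ n ∈ Finset.range N, Real.cos ((2 * n + 1 - N) * t)) = 1 / Real.sin t := by
    have := tele_sum N hN
    rw [← ht] at this
    field_simp
    linarith [this]
  have h6 : 1 / Real.sin t ≤ ‖S‖ := by
    calc 1 / Real.sin t = ∑ n ∈ Finset.range N, Real.cos ((2 * n + 1 - N) * t) := hts.symm
      _ ≤ ∑ n ∈ Finset.range N, Real.cos ((2 * n + 1 - N) * (x / 2)) :=
          Finset.sum_le_sum hpt
      _ = T.re := hre.symm
      _ ≤ ‖T‖ := by exact Complex.re_le_norm T
      _ = ‖S‖ := hnorm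
  rw [hgoal]
  have := pow_le_pow_left₀ (by positivity : (0:ℝ) ≤ 1 / Real.sin t) h6 2
  rw [div_pow, one_pow] at this
  exact this
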